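/- For every integer d ≥ 2, there exist at least 3 pairwise mutually unbiased maximally entangled bases in C^d ⊗ C^d; i.e., M_d(d,d) ≥ 3. -/

import Mathlib

open Matrix Complex

noncomputable section

/-- Trace inner product on coefficient matrices: the inner product of the
corresponding states of `ℂ^m ⊗ ℂ^n`. -/
def matInner {m n : Type*} [Fintype m] [Fintype n] (A B : Matrix m n ℂ) : ℂ :=
  (Aᴴ * B).trace

/-- The state with coefficient matrix `A` is a special entangled state with Schmidt
number `k` and all Schmidt coefficients `1/√k`: `rank A = k` and `k·AᴴA` is
idempotent (so the nonzero singular values of `A` are `k` copies of `1/√k`). -/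
def IsSEk {m n : Type*} [Fintype m] [Fintype n] (k : ℕ) (A : Matrix m n ℂ) : Prop :=
  A.rank = k ∧ ((k : ℂ) • (Aᴴ * A)) * ((k : ℂ) • (Aᴴ * A)) = (k : ℂ) • (Aᴴ * A)

/-- An SEBk of `ℂ^m ⊗ ℂ^n`: an orthonormal basis of `m·n` special entangled states
with Schmidt number `k`, written via coefficient matrices. -/
def IsSEBk {m n : ℕ} (k : ℕ) (B : Fin (m * n) → Matrix (Fin m) (Fin n) ℂ) : Prop :=
  (∀ i, IsSEk k (B i)) ∧ ∀ i j, matInner (B i) (B j) = if i = j then 1 else 0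

/-- Two bases of `ℂ^m ⊗ ℂ^n` are mutually unbiased. -/
def MUPair {m n : ℕ} (B₁ B₂ : Fin (m * n) → Matrix (Fin m) (Fin n) ℂ) : Prop :=
  ∀ i j, ‖matInner (B₁ i) (B₂ j)‖ = 1 / Real.sqrt (m * n)

/-- There exist `t` pairwise mutually unbiased SEBks in `ℂ^m ⊗ ℂ^n`. -/
def HasMUSEBk (k m n t : ℕ) : Prop :=
  ∃ B : Fin t → Fin (m * n) → Matrix (Fin m) (Fin n) ℂ,
    (∀ a, IsSEBk k (B a)) ∧ ∀ a b, a ≠ b → MUPair (B a) (B b)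

/-- `M_k(m,n)`: the maximum number of pairwise mutually unbiased SEBks in
`ℂ^m ⊗ ℂ^n` (as an extended natural number). -/
def Mnum (k m n : ℕ) : ℕ∞ :=
  sSup {c : ℕ∞ | ∃ t : ℕ, c = t ∧ HasMUSEBk k m n t}

/-- There exist `t` pairwise mutually unbiased orthonormal bases of `ℂ^q`. -/
def HasMUB (q t : ℕ) : Prop :=
  ∃ B : Fin t → Fin q → EuclideanSpace ℂ (Fin q),
    (∀ a, Orthonormal ℂ (B a)) ∧
    ∀ a b, a ≠ b → ∀ i j, ‖(inner ℂ (B a i) (B b j) : ℂ)‖ = 1 / Real.sqrt q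

/-- `N(q)`: the maximum number of mutually unbiased bases of `ℂ^q`. -/
def Nnum (q : ℕ) : ℕ∞ :=
  sSup {c : ℕ∞ | ∃ t : ℕ, c = t ∧ HasMUB q t}

namespace MUaux

open Finset

noncomputable section

variable (d : ℕ)

def tt : ℂ := Complex.exp ((Real.pi * (d+1) / d : ℝ) * Complex.I)
def om : ℂ := tt d ^ 2
def ch (x : ZMod d) : ℂ := om d ^ x.val
def qu (x : ZMod d) : ℂ := tt d ^ (x.val ^ 2)

lemma tt_ne : tt d ≠ 0 := Complex.exp_ne_zero _
lemma abs_tt : ‖tt d‖ = 1 := Complex.norm_exp_ofReal_mul_I _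
lemma om_ne : om d ≠ 0 := pow_ne_zero _ (tt_ne d)
lemma abs_om : ‖om d‖ = 1 := by rw [om, norm_pow, abs_tt, one_pow]
lemma abs_ch (x : ZMod d) : ‖ch d x‖ = 1 := by rw [ch, norm_pow, abs_om, one_pow]
lemma abs_qu (x : ZMod d) : ‖qu d x‖ = 1 := by rw [qu, norm_pow, abs_tt, one_pow]
lemma ch_ne (x : ZMod d) : ch d x ≠ 0 := pow_ne_zero _ (om_ne d)
lemma qu_ne (x : ZMod d) : qu d x ≠ 0 := pow_ne_zero _ (tt_ne d)

variable [NeZero d]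

lemma dR_ne : (d : ℝ) ≠ 0 := Nat.cast_ne_zero.mpr (NeZero.ne d)
lemma dC_ne : (d : ℂ) ≠ 0 := Nat.cast_ne_zero.mpr (NeZero.ne d)

lemma tt_pow_d : tt d ^ d = (-1 : ℂ) ^ (d + 1) := by
  rw [tt, ← Complex.exp_nat_mul]
  have h : (d : ℂ) * ((Real.pi * (d+1) / d : ℝ) * Complex.I) =
      (d + 1 : ℕ) * (Real.pi * Complex.I) := by
    have hd := dC_ne d
    push_cast
    field_simp
  rw [h, Complex.exp_nat_mul, Complex.exp_pi_mul_I]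

lemma tt_pow_2d : tt d ^ (2 * d) = 1 := by
  rw [mul_comm, pow_mul, tt_pow_d, ← pow_mul, mul_comm (d+1) 2, pow_mul, neg_one_sq, one_pow]

lemma om_pow_d : om d ^ d = 1 := by rw [om, ← pow_mul, tt_pow_2d]

lemma om_pow_mod (n : ℕ) : om d ^ (n % d) = om d ^ n := by
  conv_rhs => rw [← Nat.div_add_mod n d]
  rw [pow_add, pow_mul, om_pow_d, one_pow, one_mul]

lemma tt_sq_shift (a m : ℕ) : tt d ^ ((a + d * m) ^ 2) = tt d ^ (a ^ 2) := by
  have h : (a + d * m) ^ 2 = a ^ 2 + 2 * d * (a * m) + d * (d * m ^ 2) := by ring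
  have e1 : tt d ^ (2 * d * (a * m)) = 1 := by
    rw [pow_mul, tt_pow_2d, one_pow]
  have e2 : tt d ^ (d * (d * m ^ 2)) = 1 := by
    rw [pow_mul, tt_pow_d, ← pow_mul]
    refine Even.neg_one_pow ?_
    have h2 : (d + 1) * (d * m ^ 2) = d * (d + 1) * m ^ 2 := by ring
    rw [h2]
    exact (Nat.even_mul_succ_self d).mul_right _
  rw [h, pow_add, pow_add, e1, e2, mul_one, mul_one]

lemma tt_sq_congr {a b : ℕ} (h : a % d = b % d) : tt d ^ (a ^ 2) = tt d ^ (b ^ 2) := by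
  rcases le_total a b with hab | hab
  · obtain ⟨m, hm⟩ := (Nat.modEq_iff_dvd' hab).mp h
    have : b = a + d * m := by omega
    rw [this, tt_sq_shift]
  · obtain ⟨m, hm⟩ := (Nat.modEq_iff_dvd' hab).mp h.symm
    have : a = b + d * m := by omega
    rw [this, tt_sq_shift]

lemma ch_natCast (n : ℕ) : ch d (n : ZMod d) = om d ^ n := by
  rw [ch, ZMod.val_natCast, om_pow_mod]

lemma qu_natCast (n : ℕ) : qu d (n : ZMod d) = tt d ^ (n ^ 2) := by
  rw [qu]
  exact tt_sq_congr d (by rw [ZMod.val_natCast, Nat.mod_mod_of_dvd _ dvd_rfl])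

lemma zv (x : ZMod d) : ((x.val : ℕ) : ZMod d) = x := ZMod.natCast_rightInverse x

lemma ch_zero : ch d 0 = 1 := by
  have := ch_natCast d 0
  simpa using this

lemma ch_add (x y : ZMod d) : ch d (x + y) = ch d x * ch d y := by
  rw [← zv d x, ← zv d y, ← Nat.cast_add, ch_natCast, ch_natCast, ch_natCast, pow_add]

lemma qu_add (x y : ZMod d) : qu d (x + y) = qu d x * qu d y * ch d (x * y) := by
  rw [← zv d x, ← zv d y, ← Nat.cast_add, ← Nat.cast_mul, qu_natCast, qu_natCast, qu_natCast,
    ch_natCast]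
  have h : (x.val + y.val) ^ 2 = x.val ^ 2 + y.val ^ 2 + 2 * (x.val * y.val) := by ring
  rw [h, pow_add, pow_add, om, ← pow_mul]

lemma ch_neg (x : ZMod d) : ch d (-x) = (ch d x)⁻¹ := by
  have h : ch d x * ch d (-x) = 1 := by rw [← ch_add]; simp [ch_zero]
  field_simp [ch_ne d x] at h ⊢
  linear_combination h

lemma ch_sub (x y : ZMod d) : ch d (x - y) = ch d x * (ch d y)⁻¹ := by
  rw [sub_eq_add_neg, ch_add, ch_neg]

lemma conj_ch (x : ZMod d) : (starRingEnd ℂ) (ch d x) = (ch d x)⁻¹ := by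
  have h1 : ch d x * (starRingEnd ℂ) (ch d x) = 1 := by
    rw [Complex.mul_conj, Complex.normSq_eq_norm_sq, abs_ch, one_pow, Complex.ofReal_one]
  field_simp [ch_ne d x] at h1 ⊢
  linear_combination h1

lemma conj_qu (x : ZMod d) : (starRingEnd ℂ) (qu d x) = (qu d x)⁻¹ := by
  have h1 : qu d x * (starRingEnd ℂ) (qu d x) = 1 := by
    rw [Complex.mul_conj, Complex.normSq_eq_norm_sq, abs_qu, one_pow, Complex.ofReal_one]
  field_simp [qu_ne d x] at h1 ⊢
  linear_combination h1

lemma ch_ne_one {x : ZMod d} (hx : x ≠ 0) : ch d x ≠ 1 := by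
  have hv1 : 0 < x.val := Nat.pos_of_ne_zero (fun h => hx ((ZMod.val_eq_zero x).mp h))
  have hv2 : x.val < d := ZMod.val_lt x
  intro hone
  have hom : om d = Complex.exp ((2 * Real.pi / d : ℝ) * Complex.I) := by
    have harg : ((Real.pi * (d+1) / d : ℝ) : ℂ) * Complex.I + ((Real.pi * (d+1) / d : ℝ) : ℂ) * Complex.I
        = 2 * Real.pi * Complex.I + ((2 * Real.pi / d : ℝ) : ℂ) * Complex.I := by
      have hd := dC_ne d
      push_cast
      field_simp
      ring
    rw [om, tt, sq, ← Complex.exp_add, harg, Complex.exp_add, Complex.exp_two_pi_mul_I, one_mul]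
  have hexp : Complex.exp ((x.val : ℂ) * (((2 * Real.pi / d : ℝ) : ℂ) * Complex.I)) = 1 := by
    rw [Complex.exp_nat_mul, ← hom]
    exact hone
  obtain ⟨n, hn⟩ := Complex.exp_eq_one_iff.mp hexp
  have hC : ((x.val : ℂ)) * (((2 * Real.pi / d : ℝ)) : ℂ) = (n : ℂ) * (2 * (Real.pi : ℂ)) := by
    refine mul_right_cancel₀ Complex.I_ne_zero ?_
    linear_combination hn
  have him : (x.val : ℝ) * (2 * Real.pi / d) = n * (2 * Real.pi) := by
    exact_mod_cast hC
  have hpi := Real.pi_pos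
  have hd0 : (0 : ℝ) < d := by
    have := NeZero.pos d
    exact_mod_cast this
  have hv : (x.val : ℝ) = n * d := by
    set vr := ((x.val : ℕ) : ℝ) with hvr
    have h2 : vr * (2 * Real.pi) = (n * d) * (2 * Real.pi) := by
      have h3 : vr * (2 * Real.pi / d) * d = (n : ℝ) * (2 * Real.pi) * d := by rw [him]
      field_simp at h3
      rw [h3]; ring
    exact mul_right_cancel₀ (by positivity) h2
  rcases le_or_gt n 0 with hn0 | hn0
  · have : (n : ℝ) ≤ 0 := by exact_mod_cast hn0
    have hvpos : (0 : ℝ) < x.val := by exact_mod_cast hv1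
    nlinarith
  · have : (1 : ℝ) ≤ n := by exact_mod_cast hn0
    have hvlt : (x.val : ℝ) < d := by exact_mod_cast hv2
    nlinarith

lemma sum_ch (c : ZMod d) : ∑ x : ZMod d, ch d (c * x) = if c = 0 then (d : ℂ) else 0 := by
  rcases eq_or_ne c 0 with rfl | hc
  · simp [ch_zero, Finset.card_univ, ZMod.card]
  · rw [if_neg hc]
    have hre : ∑ x : ZMod d, ch d (c * (x + 1)) = ∑ x : ZMod d, ch d (c * x) :=
      Fintype.sum_equiv (Equiv.addRight (1 : ZMod d)) _ _ (fun x => rfl)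
    have hsplit : ∀ x : ZMod d, ch d (c * (x + 1)) = ch d (c * x) * ch d c := by
      intro x
      rw [← ch_add]
      ring_nf
    rw [Finset.sum_congr rfl (fun x _ => hsplit x), ← Finset.sum_mul] at hre
    have hfac : (∑ x : ZMod d, ch d (c * x)) * (ch d c - 1) = 0 := by
      rw [mul_sub, hre, mul_one, sub_self]
    rcases mul_eq_zero.mp hfac with h | h
    · exact h
    · exact absurd (by linear_combination h) (ch_ne_one d hc)

lemma ch_pow (x : ZMod d) (n : ℕ) : ch d x ^ n = ch d ((n : ZMod d) * x) := by
  induction n with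
  | zero => simp [ch_zero]
  | succ k ih =>
    rw [pow_succ, ih, ← ch_add]
    congr 1
    push_cast
    ring

lemma ch_zpow (x : ZMod d) (a : ℤ) : ch d x ^ a = ch d ((a : ZMod d) * x) := by
  cases a with
  | ofNat n => rw [Int.ofNat_eq_coe, zpow_natCast, ch_pow]; norm_num
  | negSucc k =>
    rw [zpow_negSucc, ch_pow, ← ch_neg]
    congr 1
    push_cast
    ring

lemma qu_zero : qu d 0 = 1 := by
  have := qu_natCast d 0
  simpa using this

lemma gauss (f : ZMod d → ℂ) (w : ZMod d) (hw : IsUnit w)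
    (hf : ∀ y m, f (y + m) * (starRingEnd ℂ) (f y)
        = f m * (starRingEnd ℂ) (f 0) * ch d (w * (y * m)))
    (h0 : ‖f 0‖ = 1) :
    ‖∑ x : ZMod d, f x‖ = Real.sqrt d := by
  have key : (∑ x : ZMod d, f x) * (starRingEnd ℂ) (∑ x : ZMod d, f x) = (d : ℂ) := by
    rw [map_sum, Finset.sum_mul_sum, Finset.sum_comm]
    have step : ∀ y : ZMod d, ∑ x : ZMod d, f x * (starRingEnd ℂ) (f y)
        = ∑ m : ZMod d, f m * (starRingEnd ℂ) (f 0) * ch d (w * (y * m)) := by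
      intro y
      rw [← Fintype.sum_equiv (Equiv.addLeft y) _ (fun x => f x * (starRingEnd ℂ) (f y))
        (fun m => rfl)]
      exact Finset.sum_congr rfl (fun m _ => hf y m)
    rw [Finset.sum_congr rfl (fun y _ => step y), Finset.sum_comm]
    have inner : ∀ m : ZMod d, ∑ y : ZMod d, f m * (starRingEnd ℂ) (f 0) * ch d (w * (y * m))
        = f m * (starRingEnd ℂ) (f 0) * (if m = 0 then (d : ℂ) else 0) := by
      intro m
      rw [← Finset.mul_sum]
      congr 1
      have harg : ∀ y : ZMod d, w * (y * m) = (w * m) * y := fun y => by ring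
      rw [Finset.sum_congr rfl (fun y _ => by rw [harg y]), sum_ch]
      congr 1
      simp only [eq_iff_iff]
      constructor
      · intro h; exact (hw.mul_right_eq_zero).mp h
      · intro h; rw [h, mul_zero]
    rw [Finset.sum_congr rfl (fun m _ => inner m)]
    have : ∀ m : ZMod d, f m * (starRingEnd ℂ) (f 0) * (if m = 0 then (d : ℂ) else 0)
        = if m = 0 then f m * (starRingEnd ℂ) (f 0) * d else 0 := by
      intro m; split <;> simp
    rw [Finset.sum_congr rfl (fun m _ => this m), Finset.sum_ite_eq' Finset.univ 0
      (fun m => f m * (starRingEnd ℂ) (f 0) * d)]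
    simp only [Finset.mem_univ, if_true]
    rw [Complex.mul_conj, Complex.normSq_eq_norm_sq, h0]
    norm_num
  have hnsq : Complex.normSq (∑ x : ZMod d, f x) = (d : ℝ) := by
    rw [Complex.mul_conj] at key
    exact_mod_cast key
  rw [Complex.norm_def, hnsq]

lemma ch_double (z : ZMod d) : ch d (z * 2) = ch d z * ch d z := by
  rw [show z * 2 = z + z by ring, ch_add]

lemma gA (c : ZMod d) :
    ‖∑ x : ZMod d, (qu d x)⁻¹ * ch d (x*x) * ch d (c*x)‖ = Real.sqrt d := by
  refine gauss d _ 1 isUnit_one (fun y m => ?_) ?_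
  · simp only [_root_.map_mul, map_inv₀, conj_qu, conj_ch, inv_inv, one_mul]
    ring_nf
    simp only [qu_add, ch_add, ch_double, qu_zero, ch_zero, mul_zero, zero_mul, add_zero,
      zero_add, mul_one, one_mul, inv_one, one_pow]
    have h1 := qu_ne d y
    have h2 := qu_ne d m
    have h3 := ch_ne d (y * m)
    have h4 := ch_ne d (y ^ 2)
    have h5 := ch_ne d (y * c)
    field_simp
  · simp [qu_zero, ch_zero]

lemma gB (c : ZMod d) :
    ‖∑ x : ZMod d, qu d x * ch d (c*x)‖ = Real.sqrt d := by
  refine gauss d _ 1 isUnit_one (fun y m => ?_) ?_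
  · simp only [_root_.map_mul, map_inv₀, conj_qu, conj_ch, inv_inv, one_mul]
    ring_nf
    simp only [qu_add, ch_add, ch_double, qu_zero, ch_zero, mul_zero, zero_mul, add_zero,
      zero_add, mul_one, one_mul, inv_one, one_pow]
    have h1 := qu_ne d y
    have h2 := ch_ne d (y * c)
    field_simp
  · simp [qu_zero, ch_zero]

lemma gC (c : ZMod d) :
    ‖∑ x : ZMod d, (qu d x)⁻¹ * ch d (c*x)‖ = Real.sqrt d := by
  refine gauss d _ (-1) isUnit_one.neg (fun y m => ?_) ?_
  · simp only [_root_.map_mul, map_inv₀, conj_qu, conj_ch, inv_inv, one_mul, neg_mul,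
      neg_one_mul, ch_neg]
    ring_nf
    simp only [qu_add, ch_add, ch_double, qu_zero, ch_zero, mul_zero, zero_mul, add_zero,
      zero_add, mul_one, one_mul, inv_one, one_pow]
    have h1 := qu_ne d y
    have h2 := qu_ne d m
    have h3 := ch_ne d (y * m)
    have h4 := ch_ne d (y * c)
    field_simp
  · simp [qu_zero, ch_zero]

lemma sum_shift (s : ZMod d) (G : ZMod d → ℂ) : ∑ y : ZMod d, G (y - s) = ∑ z : ZMod d, G z :=
  Fintype.sum_equiv (Equiv.subRight s) _ _ (fun _ => rfl)

lemma sum_shift' (s : ZMod d) (G : ZMod d → ℂ) : ∑ z : ZMod d, G (z + s) = ∑ y : ZMod d, G y :=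
  Fintype.sum_equiv (Equiv.addRight s) _ _ (fun _ => rfl)

def iota : Fin d ≃ ZMod d := Fintype.equivOfCardEq (by simp [ZMod.card])

def pr : Fin (d*d) ≃ ZMod d × ZMod d := Fintype.equivOfCardEq (by simp [ZMod.card])

def cc : ℂ := (((Real.sqrt d : ℝ)) : ℂ)⁻¹

lemma cc_mul : cc d * cc d = (d : ℂ)⁻¹ := by
  rw [cc, ← mul_inv, ← Complex.ofReal_mul, Real.mul_self_sqrt (Nat.cast_nonneg d)]
  norm_num

lemma conj_cc : (starRingEnd ℂ) (cc d) = cc d := by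
  rw [cc, map_inv₀, Complex.conj_ofReal]

lemma abs_cc : ‖cc d‖ = (Real.sqrt d)⁻¹ := by
  rw [cc, norm_inv, Complex.norm_real, Real.norm_eq_abs, _root_.abs_of_nonneg (Real.sqrt_nonneg _)]

def gg0 (st : ZMod d × ZMod d) (x y : ZMod d) : ℂ :=
  if y = x + st.1 then cc d * ch d (st.2 * x) else 0

def gg1 (st : ZMod d × ZMod d) (x y : ZMod d) : ℂ :=
  (d : ℂ)⁻¹ * (qu d (y - st.1))⁻¹ * ch d ((x + st.2) * (y - st.1))

def gg2 (st : ZMod d × ZMod d) (x y : ZMod d) : ℂ :=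
  (d : ℂ)⁻¹ * qu d x * ((qu d (y - st.1)) ^ 2)⁻¹ * ch d ((x + st.2) * (y - st.1))

def M0 (st : ZMod d × ZMod d) : Matrix (Fin d) (Fin d) ℂ :=
  Matrix.of fun j k => gg0 d st (iota d j) (iota d k)

def M1 (st : ZMod d × ZMod d) : Matrix (Fin d) (Fin d) ℂ :=
  Matrix.of fun j k => gg1 d st (iota d j) (iota d k)

def M2 (st : ZMod d × ZMod d) : Matrix (Fin d) (Fin d) ℂ :=
  Matrix.of fun j k => gg2 d st (iota d j) (iota d k)

lemma matInner_of (g h : ZMod d → ZMod d → ℂ) :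
    matInner (Matrix.of fun j k => g (iota d j) (iota d k))
      (Matrix.of fun j k => h (iota d j) (iota d k))
    = ∑ x : ZMod d, ∑ y : ZMod d, (starRingEnd ℂ) (g x y) * h x y := by
  unfold matInner
  rw [Matrix.trace]
  simp only [Matrix.diag_apply, Matrix.mul_apply, Matrix.conjTranspose_apply, Matrix.of_apply]
  rw [Finset.sum_comm]
  refine Fintype.sum_equiv (iota d) _ _ (fun j => ?_)
  exact Fintype.sum_equiv (iota d) _ _ (fun k => rfl)

lemma HA_of (g h : ZMod d → ZMod d → ℂ) (k k' : Fin d) :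
    (((Matrix.of fun j k => g (iota d j) (iota d k)) : Matrix (Fin d) (Fin d) ℂ)ᴴ
      * (Matrix.of fun j k => h (iota d j) (iota d k))) k k'
    = ∑ x : ZMod d, (starRingEnd ℂ) (g x (iota d k)) * h x (iota d k') := by
  simp only [Matrix.mul_apply, Matrix.conjTranspose_apply, Matrix.of_apply]
  exact Fintype.sum_equiv (iota d) _ _ (fun j => rfl)

lemma ch_conj_mul (t t' x : ZMod d) :
    (starRingEnd ℂ) (ch d (t * x)) * ch d (t' * x) = ch d ((t' - t) * x) := by
  rw [conj_ch, ← ch_neg, ← ch_add]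
  congr 1
  ring

lemma gram0 (st st' : ZMod d × ZMod d) :
    (∑ x : ZMod d, ∑ y : ZMod d, (starRingEnd ℂ) (gg0 d st x y) * gg0 d st' x y)
    = if st = st' then 1 else 0 := by
  simp only [gg0, apply_ite (starRingEnd ℂ), map_zero, ite_mul, zero_mul, mul_ite, mul_zero]
  have hsum : ∀ x : ZMod d, (∑ y : ZMod d, if y = x + st'.1 then
      (if y = x + st.1 then (starRingEnd ℂ) (cc d * ch d (st.2 * x)) * (cc d * ch d (st'.2 * x))
        else 0) else 0)
      = if x + st'.1 = x + st.1 then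
          (starRingEnd ℂ) (cc d * ch d (st.2 * x)) * (cc d * ch d (st'.2 * x)) else 0 := by
    intro x
    rw [Finset.sum_ite_eq' Finset.univ (x + st'.1)]
    simp only [Finset.mem_univ, if_true]
  rw [Finset.sum_congr rfl (fun x _ => hsum x)]
  simp only [add_right_inj]
  rcases eq_or_ne st'.1 st.1 with h1 | h1
  · replace h1 : st.1 = st'.1 := h1.symm
    simp only [h1, eq_self_iff_true, if_true]
    have hpt : ∀ x : ZMod d, (starRingEnd ℂ) (cc d * ch d (st.2 * x)) * (cc d * ch d (st'.2 * x))
        = (d : ℂ)⁻¹ * ch d ((st'.2 - st.2) * x) := by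
      intro x
      rw [_root_.map_mul, conj_cc]
      calc cc d * (starRingEnd ℂ) (ch d (st.2 * x)) * (cc d * ch d (st'.2 * x))
          = (cc d * cc d) * ((starRingEnd ℂ) (ch d (st.2 * x)) * ch d (st'.2 * x)) := by ring
        _ = (d : ℂ)⁻¹ * ch d ((st'.2 - st.2) * x) := by rw [cc_mul, ch_conj_mul]
    rw [Finset.sum_congr rfl (fun x _ => hpt x), ← Finset.mul_sum, sum_ch]
    rcases eq_or_ne st.2 st'.2 with h2 | h2
    · have : st = st' := Prod.ext h1 h2
      rw [if_pos this]
      rw [if_pos (by rw [h2, sub_self]), inv_mul_cancel₀ (dC_ne d)]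
    · have hne : st ≠ st' := fun h => h2 (by rw [h])
      rw [if_neg hne, if_neg (fun h => h2 (by
        have := sub_eq_zero.mp h
        exact this.symm)), mul_zero]
  · have hne : st ≠ st' := fun h => h1 (by rw [h])
    simp only [if_neg h1, if_neg hne, Finset.sum_const_zero]

lemma gram1 (st st' : ZMod d × ZMod d) :
    (∑ x : ZMod d, ∑ y : ZMod d, (starRingEnd ℂ) (gg1 d st x y) * gg1 d st' x y)
    = if st = st' then 1 else 0 := by
  have hpt : ∀ x y : ZMod d, (starRingEnd ℂ) (gg1 d st x y) * gg1 d st' x y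
      = ch d ((st.1 - st'.1) * x) *
        ((d : ℂ)⁻¹ * (d : ℂ)⁻¹ * qu d (y - st.1) * (qu d (y - st'.1))⁻¹ *
          ch d (st'.2 * (y - st'.1) - st.2 * (y - st.1))) := by
    intro x y
    unfold gg1
    simp only [_root_.map_mul, map_inv₀, conj_qu, conj_ch, inv_inv, map_natCast]
    rw [show (x + st'.2) * (y - st'.1)
        = ((x + st.2) * (y - st.1)) + ((st.1 - st'.1) * x
          + (st'.2 * (y - st'.1) - st.2 * (y - st.1))) by ring, ch_add, ch_add]
    have hca : ch d ((x + st.2) * (y - st.1)) * (ch d ((x + st.2) * (y - st.1)))⁻¹ = 1 :=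
      mul_inv_cancel₀ (ch_ne d _)
    linear_combination ((d : ℂ)⁻¹ * (d : ℂ)⁻¹ * qu d (y - st.1) * (qu d (y - st'.1))⁻¹ *
      ch d ((st.1 - st'.1) * x) * ch d (st'.2 * (y - st'.1) - st.2 * (y - st.1))) * hca
  rw [Finset.sum_congr rfl (fun x _ => Finset.sum_congr rfl (fun y _ => hpt x y)),
    ← Finset.sum_mul_sum]
  rcases eq_or_ne st.1 st'.1 with h1 | h1
  · rw [show st.1 - st'.1 = 0 by rw [h1, sub_self]]
    have hv : ∀ y : ZMod d, (d : ℂ)⁻¹ * (d : ℂ)⁻¹ * qu d (y - st.1) * (qu d (y - st'.1))⁻¹ *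
          ch d (st'.2 * (y - st'.1) - st.2 * (y - st.1))
        = (d : ℂ)⁻¹ * (d : ℂ)⁻¹ * ch d ((st'.2 - st.2) * (y - st.1)) := by
      intro y
      rw [← h1]
      rw [mul_inv_cancel_right₀ (qu_ne d (y - st.1))]
      congr 1
      ring
    rw [Finset.sum_congr rfl (fun y _ => hv y)]
    rw [← Finset.mul_sum, sum_shift d st.1 (fun z => ch d ((st'.2 - st.2) * z)), sum_ch]
    rw [sum_ch, if_pos rfl]
    rcases eq_or_ne st.2 st'.2 with h2 | h2
    · rw [if_pos (by rw [h2, sub_self]), if_pos (Prod.ext h1 h2)]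
      field_simp
      exact div_self (dC_ne d)
    · rw [if_neg (fun h => h2 (sub_eq_zero.mp h).symm), if_neg (fun h => h2 (by rw [h]))]
      ring
  · rw [sum_ch, if_neg (fun h => h1 (sub_eq_zero.mp h)), if_neg (fun h => h1 (by rw [h])),
      zero_mul]

lemma gram2 (st st' : ZMod d × ZMod d) :
    (∑ x : ZMod d, ∑ y : ZMod d, (starRingEnd ℂ) (gg2 d st x y) * gg2 d st' x y)
    = if st = st' then 1 else 0 := by
  have hpt : ∀ x y : ZMod d, (starRingEnd ℂ) (gg2 d st x y) * gg2 d st' x y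
      = ch d ((st.1 - st'.1) * x) *
        ((d : ℂ)⁻¹ * (d : ℂ)⁻¹ * (qu d (y - st.1)) ^ 2 * ((qu d (y - st'.1)) ^ 2)⁻¹ *
          ch d (st'.2 * (y - st'.1) - st.2 * (y - st.1))) := by
    intro x y
    unfold gg2
    simp only [_root_.map_mul, map_inv₀, conj_qu, conj_ch, inv_inv, inv_pow, map_natCast,
      map_pow]
    rw [show (x + st'.2) * (y - st'.1)
        = ((x + st.2) * (y - st.1)) + ((st.1 - st'.1) * x
          + (st'.2 * (y - st'.1) - st.2 * (y - st.1))) by ring, ch_add, ch_add]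
    have hca : ch d ((x + st.2) * (y - st.1)) * (ch d ((x + st.2) * (y - st.1)))⁻¹ = 1 :=
      mul_inv_cancel₀ (ch_ne d _)
    have hcq : qu d x * (qu d x)⁻¹ = 1 := mul_inv_cancel₀ (qu_ne d _)
    linear_combination (((d : ℂ)⁻¹ * (d : ℂ)⁻¹ * (qu d (y - st.1)) ^ 2 *
        ((qu d (y - st'.1)) ^ 2)⁻¹ * ch d ((st.1 - st'.1) * x) *
        ch d (st'.2 * (y - st'.1) - st.2 * (y - st.1))) * (qu d x * (qu d x)⁻¹)) * hca +
      ((d : ℂ)⁻¹ * (d : ℂ)⁻¹ * (qu d (y - st.1)) ^ 2 * ((qu d (y - st'.1)) ^ 2)⁻¹ *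
        ch d ((st.1 - st'.1) * x) * ch d (st'.2 * (y - st'.1) - st.2 * (y - st.1))) * hcq
  rw [Finset.sum_congr rfl (fun x _ => Finset.sum_congr rfl (fun y _ => hpt x y)),
    ← Finset.sum_mul_sum]
  rcases eq_or_ne st.1 st'.1 with h1 | h1
  · rw [show st.1 - st'.1 = 0 by rw [h1, sub_self]]
    have hv : ∀ y : ZMod d, (d : ℂ)⁻¹ * (d : ℂ)⁻¹ * (qu d (y - st.1)) ^ 2 *
          ((qu d (y - st'.1)) ^ 2)⁻¹ * ch d (st'.2 * (y - st'.1) - st.2 * (y - st.1))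
        = (d : ℂ)⁻¹ * (d : ℂ)⁻¹ * ch d ((st'.2 - st.2) * (y - st.1)) := by
      intro y
      rw [← h1]
      rw [mul_inv_cancel_right₀ (pow_ne_zero 2 (qu_ne d (y - st.1)))]
      congr 1
      ring
    rw [Finset.sum_congr rfl (fun y _ => hv y)]
    rw [← Finset.mul_sum, sum_shift d st.1 (fun z => ch d ((st'.2 - st.2) * z)), sum_ch]
    rw [sum_ch, if_pos rfl]
    rcases eq_or_ne st.2 st'.2 with h2 | h2
    · rw [if_pos (by rw [h2, sub_self]), if_pos (Prod.ext h1 h2)]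
      field_simp
      exact div_self (dC_ne d)
    · rw [if_neg (fun h => h2 (sub_eq_zero.mp h).symm), if_neg (fun h => h2 (by rw [h]))]
      ring
  · rw [sum_ch, if_neg (fun h => h1 (sub_eq_zero.mp h)), if_neg (fun h => h1 (by rw [h])),
      zero_mul]

lemma unit0 (st : ZMod d × ZMod d) (w w' : ZMod d) :
    (∑ x : ZMod d, (starRingEnd ℂ) (gg0 d st x w) * gg0 d st x w')
    = if w = w' then (d : ℂ)⁻¹ else 0 := by
  simp only [gg0, apply_ite (starRingEnd ℂ), map_zero, ite_mul, zero_mul, mul_ite, mul_zero]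
  have hc : ∀ x : ZMod d, (w' = x + st.1) = (x = w' - st.1) := by
    intro x
    apply propext
    constructor
    · intro h; rw [h]; ring
    · intro h; rw [h]; ring
  simp only [hc]
  rw [Finset.sum_ite_eq' Finset.univ (w' - st.1)]
  simp only [Finset.mem_univ, if_true]
  rw [show w' - st.1 + st.1 = w' by ring]
  rcases eq_or_ne w w' with h | h
  · rw [if_pos h, if_pos h, _root_.map_mul, conj_cc]
    calc cc d * (starRingEnd ℂ) (ch d (st.2 * (w' - st.1))) * (cc d * ch d (st.2 * (w' - st.1)))
        = (cc d * cc d) * ((starRingEnd ℂ) (ch d (st.2 * (w' - st.1))) * ch d (st.2 * (w' - st.1)))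
          := by ring
      _ = (d : ℂ)⁻¹ := by
          rw [cc_mul, conj_ch, inv_mul_cancel₀ (ch_ne d _), mul_one]
  · rw [if_neg h, if_neg h]

lemma unit1 (st : ZMod d × ZMod d) (w w' : ZMod d) :
    (∑ x : ZMod d, (starRingEnd ℂ) (gg1 d st x w) * gg1 d st x w')
    = if w = w' then (d : ℂ)⁻¹ else 0 := by
  have hpt : ∀ x : ZMod d, (starRingEnd ℂ) (gg1 d st x w) * gg1 d st x w'
      = ((d : ℂ)⁻¹ * (d : ℂ)⁻¹ * qu d (w - st.1) * (qu d (w' - st.1))⁻¹ *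
          ch d (st.2 * (w' - w))) * ch d ((w' - w) * x) := by
    intro x
    unfold gg1
    simp only [_root_.map_mul, map_inv₀, conj_qu, conj_ch, inv_inv, map_natCast]
    rw [show (x + st.2) * (w' - st.1)
        = ((x + st.2) * (w - st.1)) + (st.2 * (w' - w) + (w' - w) * x) by ring, ch_add, ch_add]
    have hA : ch d ((x + st.2) * (w - st.1)) * (ch d ((x + st.2) * (w - st.1)))⁻¹ = 1 :=
      mul_inv_cancel₀ (ch_ne d _)
    linear_combination ((d : ℂ)⁻¹ * (d : ℂ)⁻¹ * qu d (w - st.1) * (qu d (w' - st.1))⁻¹ *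
      ch d (st.2 * (w' - w)) * ch d ((w' - w) * x)) * hA
  rw [Finset.sum_congr rfl (fun x _ => hpt x), ← Finset.mul_sum, sum_ch]
  rcases eq_or_ne w w' with h | h
  · rw [if_pos (by rw [h, sub_self]), if_pos h, h, mul_inv_cancel_right₀ (qu_ne d _),
      sub_self, mul_zero, ch_zero, mul_one]
    field_simp
  · rw [if_neg (fun hh => h (sub_eq_zero.mp hh).symm), if_neg h, mul_zero]

lemma unit2 (st : ZMod d × ZMod d) (w w' : ZMod d) :
    (∑ x : ZMod d, (starRingEnd ℂ) (gg2 d st x w) * gg2 d st x w')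
    = if w = w' then (d : ℂ)⁻¹ else 0 := by
  have hpt : ∀ x : ZMod d, (starRingEnd ℂ) (gg2 d st x w) * gg2 d st x w'
      = ((d : ℂ)⁻¹ * (d : ℂ)⁻¹ * (qu d (w - st.1)) ^ 2 * ((qu d (w' - st.1)) ^ 2)⁻¹ *
          ch d (st.2 * (w' - w))) * ch d ((w' - w) * x) := by
    intro x
    unfold gg2
    simp only [_root_.map_mul, map_inv₀, conj_qu, conj_ch, inv_inv, inv_pow, map_natCast,
      map_pow]
    rw [show (x + st.2) * (w' - st.1)
        = ((x + st.2) * (w - st.1)) + (st.2 * (w' - w) + (w' - w) * x) by ring, ch_add, ch_add]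
    have hA : ch d ((x + st.2) * (w - st.1)) * (ch d ((x + st.2) * (w - st.1)))⁻¹ = 1 :=
      mul_inv_cancel₀ (ch_ne d _)
    have hq : qu d x * (qu d x)⁻¹ = 1 := mul_inv_cancel₀ (qu_ne d _)
    linear_combination (((d : ℂ)⁻¹ * (d : ℂ)⁻¹ * (qu d (w - st.1)) ^ 2 *
        ((qu d (w' - st.1)) ^ 2)⁻¹ * ch d (st.2 * (w' - w)) * ch d ((w' - w) * x)) *
        (qu d x * (qu d x)⁻¹)) * hA +
      ((d : ℂ)⁻¹ * (d : ℂ)⁻¹ * (qu d (w - st.1)) ^ 2 * ((qu d (w' - st.1)) ^ 2)⁻¹ *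
        ch d (st.2 * (w' - w)) * ch d ((w' - w) * x)) * hq
  rw [Finset.sum_congr rfl (fun x _ => hpt x), ← Finset.mul_sum, sum_ch]
  rcases eq_or_ne w w' with h | h
  · rw [if_pos (by rw [h, sub_self]), if_pos h, h,
      mul_inv_cancel_right₀ (pow_ne_zero 2 (qu_ne d _)), sub_self, mul_zero, ch_zero, mul_one]
    field_simp
  · rw [if_neg (fun hh => h (sub_eq_zero.mp hh).symm), if_neg h, mul_zero]

lemma dinv_eq : ‖(d : ℂ)⁻¹‖ = (d : ℝ)⁻¹ := by
  rw [norm_inv, Complex.norm_natCast]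

lemma sqrt_d_ne : Real.sqrt d ≠ 0 := by
  refine Real.sqrt_ne_zero'.mpr ?_
  exact_mod_cast NeZero.pos d

lemma cross01 (st st' : ZMod d × ZMod d) :
    ‖∑ x : ZMod d, ∑ y : ZMod d, (starRingEnd ℂ) (gg0 d st x y) * gg1 d st' x y‖
    = (d : ℝ)⁻¹ := by
  have hcol : ∀ x : ZMod d, (∑ y : ZMod d, (starRingEnd ℂ) (gg0 d st x y) * gg1 d st' x y)
      = (starRingEnd ℂ) (cc d * ch d (st.2 * x)) * gg1 d st' x (x + st.1) := by
    intro x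
    simp only [gg0, apply_ite (starRingEnd ℂ), map_zero, ite_mul, zero_mul]
    rw [Finset.sum_ite_eq' Finset.univ (x + st.1)]
    simp only [Finset.mem_univ, if_true]
  rw [Finset.sum_congr rfl (fun x _ => hcol x)]
  have hpt : ∀ x : ZMod d, (starRingEnd ℂ) (cc d * ch d (st.2 * x)) * gg1 d st' x (x + st.1)
      = (cc d * (d : ℂ)⁻¹ * (qu d (st.1 - st'.1))⁻¹ * ch d (st'.2 * (st.1 - st'.1))) *
        ((qu d x)⁻¹ * ch d (x * x) * ch d ((st'.2 - st.2) * x)) := by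
    intro x
    unfold gg1
    simp only [_root_.map_mul, map_inv₀, conj_qu, conj_ch, conj_cc, inv_inv, map_natCast]
    rw [show x + st.1 - st'.1 = x + (st.1 - st'.1) by ring, qu_add, mul_inv, mul_inv]
    rw [show (x + st'.2) * (x + (st.1 - st'.1)) = x * x + ((st'.2 - st.2) * x + (st.2 * x +
      (x * (st.1 - st'.1) + st'.2 * (st.1 - st'.1)))) by ring, ch_add, ch_add, ch_add, ch_add]
    have hA : ch d (st.2 * x) * (ch d (st.2 * x))⁻¹ = 1 := mul_inv_cancel₀ (ch_ne d _)
    have hE : ch d (x * (st.1 - st'.1)) * (ch d (x * (st.1 - st'.1)))⁻¹ = 1 :=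
      mul_inv_cancel₀ (ch_ne d _)
    linear_combination ((cc d * (d : ℂ)⁻¹ * (qu d (st.1 - st'.1))⁻¹ *
        ch d (st'.2 * (st.1 - st'.1)) * (qu d x)⁻¹ * ch d (x * x) *
        ch d ((st'.2 - st.2) * x)) * (ch d (x * (st.1 - st'.1)) *
        (ch d (x * (st.1 - st'.1)))⁻¹)) * hA +
      (cc d * (d : ℂ)⁻¹ * (qu d (st.1 - st'.1))⁻¹ * ch d (st'.2 * (st.1 - st'.1)) *
        (qu d x)⁻¹ * ch d (x * x) * ch d ((st'.2 - st.2) * x)) * hE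
  rw [Finset.sum_congr rfl (fun x _ => hpt x), ← Finset.mul_sum]
  rw [norm_mul]
  rw [gA]
  simp only [norm_mul, norm_inv, abs_cc, abs_qu, abs_ch, Complex.norm_natCast]
  have h2 := sqrt_d_ne d
  field_simp

lemma cross02 (st st' : ZMod d × ZMod d) :
    ‖∑ x : ZMod d, ∑ y : ZMod d, (starRingEnd ℂ) (gg0 d st x y) * gg2 d st' x y‖
    = (d : ℝ)⁻¹ := by
  have hcol : ∀ x : ZMod d, (∑ y : ZMod d, (starRingEnd ℂ) (gg0 d st x y) * gg2 d st' x y)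
      = (starRingEnd ℂ) (cc d * ch d (st.2 * x)) * gg2 d st' x (x + st.1) := by
    intro x
    simp only [gg0, apply_ite (starRingEnd ℂ), map_zero, ite_mul, zero_mul]
    rw [Finset.sum_ite_eq' Finset.univ (x + st.1)]
    simp only [Finset.mem_univ, if_true]
  rw [Finset.sum_congr rfl (fun x _ => hcol x)]
  have hpt : ∀ x : ZMod d, (starRingEnd ℂ) (cc d * ch d (st.2 * x)) * gg2 d st' x (x + st.1)
      = (cc d * (d : ℂ)⁻¹ * ((qu d (st.1 - st'.1)) ^ 2)⁻¹ * ch d (st'.2 * (st.1 - st'.1))) *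
        ((qu d x)⁻¹ * ch d (x * x) * ch d (((st'.2 - st.2) - (st.1 - st'.1)) * x)) := by
    intro x
    unfold gg2
    simp only [_root_.map_mul, map_inv₀, conj_qu, conj_ch, conj_cc, inv_inv, map_natCast]
    rw [show x + st.1 - st'.1 = x + (st.1 - st'.1) by ring, qu_add, mul_pow, mul_pow,
      mul_inv, mul_inv]
    rw [show ((qu d x) ^ 2)⁻¹ = (qu d x)⁻¹ * (qu d x)⁻¹ by rw [sq, mul_inv],
      show ((ch d (x * (st.1 - st'.1))) ^ 2)⁻¹
        = (ch d (x * (st.1 - st'.1)))⁻¹ * (ch d (x * (st.1 - st'.1)))⁻¹ by rw [sq, mul_inv]]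
    rw [show (x + st'.2) * (x + (st.1 - st'.1)) = x * x + ((((st'.2 - st.2) - (st.1 - st'.1)) * x)
      + (st.2 * x + (x * (st.1 - st'.1) + (x * (st.1 - st'.1) + st'.2 * (st.1 - st'.1)))))
      by ring, ch_add, ch_add, ch_add, ch_add, ch_add]
    have hA : ch d (st.2 * x) * (ch d (st.2 * x))⁻¹ = 1 := mul_inv_cancel₀ (ch_ne d _)
    have hE : ch d (x * (st.1 - st'.1)) * (ch d (x * (st.1 - st'.1)))⁻¹ = 1 :=
      mul_inv_cancel₀ (ch_ne d _)
    have hq : qu d x * (qu d x)⁻¹ = 1 := mul_inv_cancel₀ (qu_ne d _)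
    set W := cc d * (d : ℂ)⁻¹ * ((qu d (st.1 - st'.1)) ^ 2)⁻¹ * ch d (st'.2 * (st.1 - st'.1)) *
      (qu d x)⁻¹ * ch d (x * x) * ch d (((st'.2 - st.2) - (st.1 - st'.1)) * x) with hW
    set E := ch d (x * (st.1 - st'.1)) * (ch d (x * (st.1 - st'.1)))⁻¹ with hEe
    set Q := qu d x * (qu d x)⁻¹ with hQe
    linear_combination (W * E * E * Q) * hA + (W * E * Q) * hE + (W * Q) * hE + W * hq
  rw [Finset.sum_congr rfl (fun x _ => hpt x), ← Finset.mul_sum]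
  rw [norm_mul, gA]
  simp only [norm_mul, norm_inv, norm_pow, abs_cc, abs_qu, abs_ch, Complex.norm_natCast]
  have h2 := sqrt_d_ne d
  field_simp

lemma cross12 (st st' : ZMod d × ZMod d) :
    ‖∑ x : ZMod d, ∑ y : ZMod d, (starRingEnd ℂ) (gg1 d st x y) * gg2 d st' x y‖
    = (d : ℝ)⁻¹ := by
  have hpt : ∀ x y : ZMod d, (starRingEnd ℂ) (gg1 d st x y) * gg2 d st' x y
      = (qu d x * ch d ((st.1 - st'.1) * x)) *
        ((d : ℂ)⁻¹ * (d : ℂ)⁻¹ * qu d (y - st.1) * ((qu d (y - st'.1)) ^ 2)⁻¹ *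
          ch d (st'.2 * (y - st'.1) - st.2 * (y - st.1))) := by
    intro x y
    unfold gg1 gg2
    simp only [_root_.map_mul, map_inv₀, conj_qu, conj_ch, inv_inv, map_natCast]
    rw [show (x + st'.2) * (y - st'.1) = ((x + st.2) * (y - st.1)) + ((st.1 - st'.1) * x
      + (st'.2 * (y - st'.1) - st.2 * (y - st.1))) by ring, ch_add, ch_add]
    have hA : ch d ((x + st.2) * (y - st.1)) * (ch d ((x + st.2) * (y - st.1)))⁻¹ = 1 :=
      mul_inv_cancel₀ (ch_ne d _)
    linear_combination (qu d x * ch d ((st.1 - st'.1) * x) * ((d : ℂ)⁻¹ * (d : ℂ)⁻¹ *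
      qu d (y - st.1) * ((qu d (y - st'.1)) ^ 2)⁻¹ *
      ch d (st'.2 * (y - st'.1) - st.2 * (y - st.1)))) * hA
  rw [Finset.sum_congr rfl (fun x _ => Finset.sum_congr rfl (fun y _ => hpt x y)),
    ← Finset.sum_mul_sum]
  rw [← sum_shift' d st.1 (fun y => (d : ℂ)⁻¹ * (d : ℂ)⁻¹ * qu d (y - st.1) *
    ((qu d (y - st'.1)) ^ 2)⁻¹ * ch d (st'.2 * (y - st'.1) - st.2 * (y - st.1)))]
  have hpt2 : ∀ z : ZMod d, (d : ℂ)⁻¹ * (d : ℂ)⁻¹ * qu d (z + st.1 - st.1) *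
        ((qu d (z + st.1 - st'.1)) ^ 2)⁻¹ *
        ch d (st'.2 * (z + st.1 - st'.1) - st.2 * (z + st.1 - st.1))
      = ((d : ℂ)⁻¹ * (d : ℂ)⁻¹ * ((qu d (st.1 - st'.1)) ^ 2)⁻¹ *
          ch d (st'.2 * (st.1 - st'.1))) *
        ((qu d z)⁻¹ * ch d (((st'.2 - st.2) - ((st.1 - st'.1) + (st.1 - st'.1))) * z)) := by
    intro z
    rw [show z + st.1 - st.1 = z by ring, show z + st.1 - st'.1 = z + (st.1 - st'.1) by ring]
    rw [qu_add, mul_pow, mul_pow, mul_inv, mul_inv]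
    rw [show ((qu d z) ^ 2)⁻¹ = (qu d z)⁻¹ * (qu d z)⁻¹ by rw [sq, mul_inv],
      show ((ch d (z * (st.1 - st'.1))) ^ 2)⁻¹
        = (ch d (z * (st.1 - st'.1)))⁻¹ * (ch d (z * (st.1 - st'.1)))⁻¹ by rw [sq, mul_inv]]
    rw [show st'.2 * (z + (st.1 - st'.1)) - st.2 * z
      = (((st'.2 - st.2) - ((st.1 - st'.1) + (st.1 - st'.1))) * z)
        + (z * (st.1 - st'.1) + (z * (st.1 - st'.1) + st'.2 * (st.1 - st'.1)))
      by ring, ch_add, ch_add, ch_add]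
    have hE : ch d (z * (st.1 - st'.1)) * (ch d (z * (st.1 - st'.1)))⁻¹ = 1 :=
      mul_inv_cancel₀ (ch_ne d _)
    have hq : qu d z * (qu d z)⁻¹ = 1 := mul_inv_cancel₀ (qu_ne d _)
    set W := (d : ℂ)⁻¹ * (d : ℂ)⁻¹ * ((qu d (st.1 - st'.1)) ^ 2)⁻¹ *
      ch d (st'.2 * (st.1 - st'.1)) * (qu d z)⁻¹ *
      ch d (((st'.2 - st.2) - ((st.1 - st'.1) + (st.1 - st'.1))) * z) with hW
    set E := ch d (z * (st.1 - st'.1)) * (ch d (z * (st.1 - st'.1)))⁻¹ with hEe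
    linear_combination (W * E * E) * hq + (W * E) * hE + W * hE
  rw [Finset.sum_congr rfl (fun z _ => hpt2 z), ← Finset.mul_sum]
  rw [norm_mul, norm_mul, gB, gC]
  simp only [norm_mul, norm_inv, norm_pow, abs_qu, abs_ch, Complex.norm_natCast]
  have h2 := sqrt_d_ne d
  have h3 := dR_ne d
  field_simp
  rw [Real.sq_sqrt (Nat.cast_nonneg _)]

lemma M0_unit (st : ZMod d × ZMod d) :
    (M0 d st)ᴴ * M0 d st = (d : ℂ)⁻¹ • (1 : Matrix (Fin d) (Fin d) ℂ) := by
  ext k k'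
  rw [show M0 d st = Matrix.of fun j k => gg0 d st (iota d j) (iota d k) from rfl, HA_of, unit0,
    Matrix.smul_apply, Matrix.one_apply]
  rcases eq_or_ne k k' with h | h
  · rw [if_pos (by rw [h]), if_pos h, smul_eq_mul, mul_one]
  · rw [if_neg (fun hh => h ((iota d).injective hh)), if_neg h, smul_eq_mul, mul_zero]

lemma M1_unit (st : ZMod d × ZMod d) :
    (M1 d st)ᴴ * M1 d st = (d : ℂ)⁻¹ • (1 : Matrix (Fin d) (Fin d) ℂ) := by
  ext k k'
  rw [show M1 d st = Matrix.of fun j k => gg1 d st (iota d j) (iota d k) from rfl, HA_of, unit1,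
    Matrix.smul_apply, Matrix.one_apply]
  rcases eq_or_ne k k' with h | h
  · rw [if_pos (by rw [h]), if_pos h, smul_eq_mul, mul_one]
  · rw [if_neg (fun hh => h ((iota d).injective hh)), if_neg h, smul_eq_mul, mul_zero]

lemma M2_unit (st : ZMod d × ZMod d) :
    (M2 d st)ᴴ * M2 d st = (d : ℂ)⁻¹ • (1 : Matrix (Fin d) (Fin d) ℂ) := by
  ext k k'
  rw [show M2 d st = Matrix.of fun j k => gg2 d st (iota d j) (iota d k) from rfl, HA_of, unit2,
    Matrix.smul_apply, Matrix.one_apply]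
  rcases eq_or_ne k k' with h | h
  · rw [if_pos (by rw [h]), if_pos h, smul_eq_mul, mul_one]
  · rw [if_neg (fun hh => h ((iota d).injective hh)), if_neg h, smul_eq_mul, mul_zero]

lemma isSEk_of_unit {A : Matrix (Fin d) (Fin d) ℂ}
    (h : Aᴴ * A = (d : ℂ)⁻¹ • (1 : Matrix (Fin d) (Fin d) ℂ)) : IsSEk d A := by
  have hone : ((d : ℂ) • Aᴴ) * A = 1 := by
    rw [Matrix.smul_mul, h, smul_smul, mul_inv_cancel₀ (dC_ne d), one_smul]
  have hU : IsUnit A := (Matrix.isUnit_iff_isUnit_det A).mpr (Matrix.isUnit_det_of_left_inverse hone)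
  constructor
  · rw [Matrix.rank_of_isUnit A hU, Fintype.card_fin]
  · rw [h, smul_smul, mul_inv_cancel₀ (dC_ne d), one_smul, one_mul]

lemma inner_M0 (i i' : Fin (d*d)) :
    matInner (M0 d (pr d i)) (M0 d (pr d i')) = if i = i' then 1 else 0 := by
  rw [show M0 d (pr d i) = Matrix.of fun j k => gg0 d (pr d i) (iota d j) (iota d k) from rfl,
    show M0 d (pr d i') = Matrix.of fun j k => gg0 d (pr d i') (iota d j) (iota d k) from rfl,
    matInner_of, gram0]
  simp only [Equiv.apply_eq_iff_eq]

lemma inner_M1 (i i' : Fin (d*d)) :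
    matInner (M1 d (pr d i)) (M1 d (pr d i')) = if i = i' then 1 else 0 := by
  rw [show M1 d (pr d i) = Matrix.of fun j k => gg1 d (pr d i) (iota d j) (iota d k) from rfl,
    show M1 d (pr d i') = Matrix.of fun j k => gg1 d (pr d i') (iota d j) (iota d k) from rfl,
    matInner_of, gram1]
  simp only [Equiv.apply_eq_iff_eq]

lemma inner_M2 (i i' : Fin (d*d)) :
    matInner (M2 d (pr d i)) (M2 d (pr d i')) = if i = i' then 1 else 0 := by
  rw [show M2 d (pr d i) = Matrix.of fun j k => gg2 d (pr d i) (iota d j) (iota d k) from rfl,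
    show M2 d (pr d i') = Matrix.of fun j k => gg2 d (pr d i') (iota d j) (iota d k) from rfl,
    matInner_of, gram2]
  simp only [Equiv.apply_eq_iff_eq]

lemma abs_matInner_swap (A B : Matrix (Fin d) (Fin d) ℂ) :
    ‖matInner B A‖ = ‖matInner A B‖ := by
  have : matInner B A = (starRingEnd ℂ) (matInner A B) := by
    unfold matInner
    show (Bᴴ * A).trace = star ((Aᴴ * B).trace)
    rw [← Matrix.trace_conjTranspose, Matrix.conjTranspose_mul,
      Matrix.conjTranspose_conjTranspose]
  rw [this, Complex.norm_conj]

lemma sqrt_dd : 1 / Real.sqrt ((d : ℝ) * (d : ℝ)) = (d : ℝ)⁻¹ := by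
  rw [Real.sqrt_mul_self (Nat.cast_nonneg d), one_div]

lemma mu01 : MUPair (fun i => M0 d (pr d i)) (fun i => M1 d (pr d i)) := by
  intro i j
  show ‖matInner (M0 d (pr d i)) (M1 d (pr d j))‖ = _
  rw [show M0 d (pr d i) = Matrix.of fun j k => gg0 d (pr d i) (iota d j) (iota d k) from rfl,
    show M1 d (pr d j) = Matrix.of fun j' k => gg1 d (pr d j) (iota d j') (iota d k) from rfl,
    matInner_of, cross01, ← sqrt_dd]

lemma mu02 : MUPair (fun i => M0 d (pr d i)) (fun i => M2 d (pr d i)) := by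
  intro i j
  show ‖matInner (M0 d (pr d i)) (M2 d (pr d j))‖ = _
  rw [show M0 d (pr d i) = Matrix.of fun j k => gg0 d (pr d i) (iota d j) (iota d k) from rfl,
    show M2 d (pr d j) = Matrix.of fun j' k => gg2 d (pr d j) (iota d j') (iota d k) from rfl,
    matInner_of, cross02, ← sqrt_dd]

lemma mu12 : MUPair (fun i => M1 d (pr d i)) (fun i => M2 d (pr d i)) := by
  intro i j
  show ‖matInner (M1 d (pr d i)) (M2 d (pr d j))‖ = _
  rw [show M1 d (pr d i) = Matrix.of fun j' k => gg1 d (pr d i) (iota d j') (iota d k) from rfl,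
    show M2 d (pr d j) = Matrix.of fun j' k => gg2 d (pr d j) (iota d j') (iota d k) from rfl,
    matInner_of, cross12, ← sqrt_dd]

lemma mu_swap {B1 B2 : Fin (d*d) → Matrix (Fin d) (Fin d) ℂ} (h : MUPair B1 B2) :
    MUPair B2 B1 := by
  intro i j
  rw [abs_matInner_swap]
  exact h j i

lemma seb0 : IsSEBk d (fun i => M0 d (pr d i)) :=
  ⟨fun i => isSEk_of_unit d (M0_unit d (pr d i)), inner_M0 d⟩

lemma seb1 : IsSEBk d (fun i => M1 d (pr d i)) :=
  ⟨fun i => isSEk_of_unit d (M1_unit d (pr d i)), inner_M1 d⟩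

lemma seb2 : IsSEBk d (fun i => M2 d (pr d i)) :=
  ⟨fun i => isSEk_of_unit d (M2_unit d (pr d i)), inner_M2 d⟩

lemma hasMUSEBk3 : HasMUSEBk d d d 3 := by
  refine ⟨![fun i => M0 d (pr d i), fun i => M1 d (pr d i), fun i => M2 d (pr d i)], ?_, ?_⟩
  · intro a
    fin_cases a
    · exact seb0 d
    · exact seb1 d
    · exact seb2 d
  · intro a b hab
    fin_cases a <;> fin_cases b
    · exact absurd rfl hab
    · exact mu01 d
    · exact mu02 d
    · exact mu_swap d (mu01 d)
    · exact absurd rfl hab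
    · exact mu12 d
    · exact mu_swap d (mu02 d)
    · exact mu_swap d (mu12 d)
    · exact absurd rfl hab

end

end MUaux

/-- For every integer `d ≥ 2` there exist at least 3 pairwise mutually unbiased
maximally entangled bases in `ℂ^d ⊗ ℂ^d`: `M_d(d,d) ≥ 3`. -/
theorem Mnum_self_ge_three : ∀ d : ℕ, 2 ≤ d → (3 : ℕ∞) ≤ Mnum d d d := by
  intro d hd
  haveI : NeZero d := ⟨by omega⟩
  refine le_sSup ?_
  exact ⟨3, by norm_num, MUaux.hasMUSEBk3 d⟩
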